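/- Let e ≥ 1 and let f ∈ 𝔽_p[Y_1,…,Y_e] be a nonzero polynomial. Let L be the localization of the polynomial ring 𝔽_p[Y_1,…,Y_e] at the multiplicative submonoid generated by {Y_1,…,Y_e, f}. Then the group of units Lˣ is a finitely generated (abelian) group. -/

import Mathlib

open MvPolynomial UniqueFactorizationMonoid

/-- Units of a multivariate polynomial ring over a field (finitely many variables)
are constants. -/
lemma mv_isUnit_eq_C {K : Type*} [Field K] :
    ∀ (n : ℕ) (a : MvPolynomial (Fin n) K), IsUnit a → ∃ c : K, IsUnit c ∧ a = MvPolynomial.C c := by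
  intro n
  induction n with
  | zero =>
    intro a ha
    exact ⟨MvPolynomial.constantCoeff a, ha.map _, MvPolynomial.eq_C_of_isEmpty a⟩
  | succ m ih =>
    intro a ha
    have h1 : IsUnit ((MvPolynomial.finSuccEquiv K m) a) := ha.map _
    obtain ⟨r, hr, hra⟩ := Polynomial.isUnit_iff.mp h1
    obtain ⟨c, hc, rfl⟩ := ih r hr
    refine ⟨c, hc, ?_⟩
    have h3 := congrArg (MvPolynomial.finSuccEquiv K m).symm hra
    rw [AlgEquiv.symm_apply_apply] at h3
    rw [← h3]
    have h2 := congrArg (fun g : K →+* MvPolynomial (Fin (m+1)) K => g c)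
      (MvPolynomial.finSuccEquiv_comp_C_eq_C m)
    simpa using h2

theorem units_of_localization_fg (p : ℕ) [Fact p.Prime] (e : ℕ) (he : 1 ≤ e)
    (f : MvPolynomial (Fin e) (ZMod p)) (hf : f ≠ 0) :
    Group.FG
      (Localization
        (Submonoid.closure (insert f (Set.range (MvPolynomial.X (R := ZMod p) (σ := Fin e))))))ˣ := by
  classical
  set S : Submonoid (MvPolynomial (Fin e) (ZMod p)) :=
    Submonoid.closure (insert f (Set.range (MvPolynomial.X (R := ZMod p) (σ := Fin e)))) with hS
  let R := MvPolynomial (Fin e) (ZMod p)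
  let L := Localization S
  have h0S : ∀ w ∈ S, w ≠ (0 : R) := by
    intro w hw
    induction hw using Submonoid.closure_induction with
    | mem x hx =>
      rcases hx with rfl | ⟨i, rfl⟩
      · exact hf
      · exact MvPolynomial.X_ne_zero i
    | one => exact one_ne_zero
    | mul x y hx hy ihx ihy => exact mul_ne_zero ihx ihy
  have hfS : f ∈ S := Submonoid.subset_closure (Set.mem_insert _ _)
  have hXS : ∀ i : Fin e, (MvPolynomial.X i : R) ∈ S :=
    fun i => Submonoid.subset_closure (Set.mem_insert_iff.mpr (Or.inr ⟨i, rfl⟩))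
  set D : Set R := (Set.range fun c : (ZMod p)ˣ => (MvPolynomial.C (c : ZMod p) : R)) ∪
      (↑(factors f).toFinset ∪ ⋃ i : Fin e, ↑(factors (MvPolynomial.X i : R)).toFinset) with hD
  have hDfin : D.Finite := by
    apply Set.Finite.union (Set.finite_range _)
    apply Set.Finite.union (Finset.finite_toSet _)
    exact Set.finite_iUnion fun i => Finset.finite_toSet _
  set T : Set Lˣ := Units.val ⁻¹' (algebraMap R L '' D) with hT
  have hTfin : T.Finite := Set.Finite.preimage Units.val_injective.injOn (hDfin.image _)
  -- units of R give elements of closure T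
  have hCunit : ∀ x : R, IsUnit x → ∀ v : Lˣ, (v : L) = algebraMap R L x →
      v ∈ Subgroup.closure T := by
    intro x hx v hv
    obtain ⟨c, hc, rfl⟩ := mv_isUnit_eq_C e x hx
    exact Subgroup.subset_closure ⟨MvPolynomial.C c, Or.inl ⟨hc.unit, by simp⟩, hv.symm⟩
  -- a prime dividing an element of S divides f or some X i
  have hprime : ∀ w ∈ S, ∀ q : R, Prime q → q ∣ w →
      q ∣ f ∨ ∃ i : Fin e, q ∣ MvPolynomial.X i := by
    intro w hw
    induction hw using Submonoid.closure_induction with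
    | mem x hx =>
      intro q hq hqx
      rcases hx with rfl | ⟨i, rfl⟩
      · exact Or.inl hqx
      · exact Or.inr ⟨i, hqx⟩
    | one =>
      intro q hq hq1
      exact absurd (isUnit_of_dvd_one hq1) hq.not_unit
    | mul x y hx hy ihx ihy =>
      intro q hq hqxy
      rcases hq.2.2 x y hqxy with h | h
      · exact ihx q hq h
      · exact ihy q hq h
  -- key lemma
  have key : ∀ a : R, ∀ w, w ∈ S → a ∣ w →
      ∃ v : Lˣ, (v : L) = algebraMap R L a ∧ v ∈ Subgroup.closure T := by
    intro a
    induction a using UniqueFactorizationMonoid.induction_on_prime with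
    | h₁ =>
      intro w hw hdvd
      exact absurd (zero_dvd_iff.mp hdvd) (h0S w hw)
    | h₂ x hx =>
      intro w hw hdvd
      have hux : IsUnit (algebraMap R L x) := hx.map _
      exact ⟨hux.unit, rfl, hCunit x hx hux.unit rfl⟩
    | h₃ a q ha hq ih =>
      intro w hw hdvd
      obtain ⟨va, hva, hvaT⟩ := ih w hw ((dvd_mul_left a q).trans hdvd)
      have hqw : q ∣ w := (dvd_mul_right q a).trans hdvd
      -- find the generator g with q ∣ g
      obtain ⟨g, hgS, hg0, hgD, hqg⟩ :
          ∃ g : R, g ∈ S ∧ g ≠ 0 ∧ (↑(factors g).toFinset : Set R) ⊆ D ∧ q ∣ g := by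
        rcases hprime w hw q hq hqw with h | ⟨i, h⟩
        · exact ⟨f, hfS, hf, fun r hr => Or.inr (Or.inl hr), h⟩
        · refine ⟨MvPolynomial.X i, hXS i, MvPolynomial.X_ne_zero i, fun r hr => ?_, h⟩
          exact Or.inr (Or.inr (Set.mem_iUnion.mpr ⟨i, hr⟩))
      obtain ⟨r, hr, hassoc⟩ := exists_mem_factors_of_dvd hg0 hq.irreducible hqg
      obtain ⟨u, hu⟩ := hassoc
      have hrdvd : r ∣ g := dvd_of_mem_factors hr
      have hrunit : IsUnit (algebraMap R L r) :=
        isUnit_of_dvd_unit (map_dvd _ hrdvd) (IsLocalization.map_units L ⟨g, hgS⟩)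
      have huunit : IsUnit (algebraMap R L ((u⁻¹ : Rˣ) : R)) := (u⁻¹).isUnit.map _
      have hrT : hrunit.unit ∈ Subgroup.closure T :=
        Subgroup.subset_closure ⟨r, hgD (Multiset.mem_toFinset.mpr hr), rfl⟩
      have huT : huunit.unit ∈ Subgroup.closure T := hCunit _ (u⁻¹).isUnit huunit.unit rfl
      refine ⟨hrunit.unit * huunit.unit * va, ?_, ?_⟩
      · have hqr : r * ((u⁻¹ : Rˣ) : R) = q := by
          rw [← hu]; exact Units.mul_inv_cancel_right q u
        rw [Units.val_mul, Units.val_mul, IsUnit.unit_spec, IsUnit.unit_spec, hva,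
          ← map_mul, ← map_mul, hqr]
      · exact Subgroup.mul_mem _ (Subgroup.mul_mem _ hrT huT) hvaT
  -- conclude
  rw [Group.fg_iff]
  refine ⟨T, ?_, hTfin⟩
  rw [Subgroup.eq_top_iff']
  intro u
  obtain ⟨a, s, hu1⟩ : ∃ a s, (u : L) = Localization.mk a s :=
    Localization.induction_on (u : L) fun y => ⟨y.1, y.2, rfl⟩
  obtain ⟨b, t, hu2⟩ : ∃ b t, ((u⁻¹ : Lˣ) : L) = Localization.mk b t :=
    Localization.induction_on ((u⁻¹ : Lˣ) : L) fun y => ⟨y.1, y.2, rfl⟩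
  have hmul : Localization.mk a s * Localization.mk b t = 1 := by
    rw [← hu1, ← hu2]
    exact_mod_cast u.mul_inv
  rw [Localization.mk_mul, ← Localization.mk_one, Localization.mk_eq_mk_iff,
    Localization.r_iff_exists] at hmul
  obtain ⟨c, hc⟩ := hmul
  simp only [Submonoid.coe_one, Submonoid.coe_mul, one_mul, mul_one] at hc
  have hab : a * b = (s : R) * t := mul_left_cancel₀ (h0S c c.2) hc
  obtain ⟨va, hva, hvaT⟩ := key a ((s : R) * t) (mul_mem s.2 t.2) ⟨b, hab.symm⟩
  obtain ⟨vs, hvs, hvsT⟩ := key (s : R) (s : R) s.2 dvd_rfl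
  have huv : u * vs = va := by
    apply Units.ext
    rw [Units.val_mul, hu1, hvs, hva, ← Localization.mk_one_eq_algebraMap, ← Localization.mk_one_eq_algebraMap,
      Localization.mk_mul, Localization.mk_eq_mk_iff, Localization.r_iff_exists]
    exact ⟨1, by push_cast; ring⟩
  have : u = va * vs⁻¹ := eq_mul_inv_of_mul_eq huv
  rw [this]
  exact Subgroup.mul_mem _ hvaT (Subgroup.inv_mem _ hvsT)
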